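/- Let ω < 0, 0 < α ≤ 1 and 0 < αγ ≤ β ≤ 1, and let λ be a negative real number, λ < 0. Then the characteristic equation F(s) = λ has no root s with Re(s) ≥ 0; all its roots lie in the open left half-plane. -/

import Mathlib

open Real Complex Filter Set Topology

set_option maxHeartbeats 1000000

/-- The curve parametrization Λ(θ) bounding the stability region. -/
noncomputable def Lam (α β γ ω : ℝ) (θ : ℝ) : ℂ :=
  ((|ω| ^ (β / α) * Real.sin θ ^ (β / α - γ) * Real.sin (α * π / 2) ^ γ *
      Real.sin (α * π / 2 - θ) ^ (-(β / α)) : ℝ) : ℂ) *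
    Complex.exp (Complex.I * ((γ * θ + (β - α * γ) * π / 2 : ℝ) : ℂ))

/-- The characteristic function F(s) = s^(β-αγ) (s^α - ω)^γ (principal branches). -/
noncomputable def Fc (α β γ ω : ℝ) (s : ℂ) : ℂ :=
  s ^ ((β - α * γ : ℝ) : ℂ) * (s ^ ((α : ℝ) : ℂ) - (ω : ℂ)) ^ ((γ : ℝ) : ℂ)

/-- μ(θ) = (|ω| sin θ / sin(απ/2 - θ))^(1/α). -/
noncomputable def muP (α ω : ℝ) (θ : ℝ) : ℝ :=
  (|ω| * Real.sin θ / Real.sin (α * π / 2 - θ)) ^ (1 / α)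

/-- ρ(θ) = |ω| sin(απ/2) / sin(απ/2 - θ). -/
noncomputable def rhoP (α ω : ℝ) (θ : ℝ) : ℝ :=
  |ω| * Real.sin (α * π / 2) / Real.sin (α * π / 2 - θ)

lemma cpow_real_polar (z : ℂ) (hz : z ≠ 0) (r : ℝ) :
    z ^ (r : ℂ) = ((‖z‖ ^ r : ℝ) : ℂ) *
      Complex.exp (((r * Complex.arg z : ℝ) : ℂ) * Complex.I) := by
  rw [Complex.cpow_def_of_ne_zero hz, Complex.log]
  rw [Real.rpow_def_of_pos (norm_pos_iff.mpr hz)]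
  push_cast
  rw [← Complex.exp_add]
  ring_nf

lemma sin_abs_eq {x : ℝ} (h : |x| ≤ π) : Real.sin |x| = |Real.sin x| := by
  rcases abs_cases x with ⟨h1, h2⟩ | ⟨h1, h2⟩
  · rw [h1, (_root_.abs_of_nonneg (Real.sin_nonneg_of_nonneg_of_le_pi h2 (h1 ▸ h)))]
  · rw [h1, Real.sin_neg, _root_.abs_of_nonpos]
    exact Real.sin_nonpos_of_nonpos_of_neg_pi_le (by linarith) (by rw [h1] at h; linarith)

lemma polar_re (r x : ℝ) : (((r : ℝ) : ℂ) * Complex.exp (((x : ℝ) : ℂ) * Complex.I)).re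
    = r * Real.cos x := by
  rw [Complex.mul_re, Complex.exp_ofReal_mul_I_re, Complex.exp_ofReal_mul_I_im]
  simp

lemma polar_im (r x : ℝ) : (((r : ℝ) : ℂ) * Complex.exp (((x : ℝ) : ℂ) * Complex.I)).im
    = r * Real.sin x := by
  rw [Complex.mul_im, Complex.exp_ofReal_mul_I_re, Complex.exp_ofReal_mul_I_im]
  simp

theorem no_unstable_roots_for_negative_lambda (α β γ ω : ℝ) (hω : ω < 0) (hα0 : 0 < α)
    (hα1 : α ≤ 1) (hαγ : 0 < α * γ) (hβ0 : α * γ ≤ β) (hβ1 : β ≤ 1)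
    (lam : ℝ) (hlam : lam < 0) :
    ∀ s : ℂ, Fc α β γ ω s = (lam : ℂ) → s.re < 0 := by
  intro s hs
  by_contra hre
  push_neg at hre
  have hπ : (0:ℝ) < π := Real.pi_pos
  have hγ : 0 < γ := by
    by_contra hg; push_neg at hg; nlinarith
  have hb : 0 ≤ β - α * γ := by linarith
  rcases eq_or_ne s 0 with rfl | hs0
  · -- s = 0 case
    have hα' : ((α : ℝ) : ℂ) ≠ 0 := by exact_mod_cast hα0.ne'
    rw [Fc, Complex.zero_cpow hα'] at hs
    rcases eq_or_ne (β - α * γ) 0 with hb0 | hb0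
    · rw [hb0] at hs
      simp only [Complex.ofReal_zero, Complex.cpow_zero, one_mul, zero_sub] at hs
      have hneg : (-(ω:ℂ)) = (((-ω : ℝ)) : ℂ) := by push_cast; ring
      rw [hneg, ← Complex.ofReal_cpow (by linarith : (0:ℝ) ≤ -ω)] at hs
      have : (-ω) ^ γ = lam := by exact_mod_cast hs
      nlinarith [Real.rpow_pos_of_pos (by linarith : (0:ℝ) < -ω) γ]
    · have hb' : ((β - α * γ : ℝ) : ℂ) ≠ 0 := by exact_mod_cast hb0
      rw [Complex.zero_cpow hb', zero_mul] at hs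
      exact absurd hs.symm (by exact_mod_cast hlam.ne)
  · -- s ≠ 0, re s ≥ 0
    set θs := Complex.arg s with hθsdef
    have hθs : |θs| ≤ π / 2 := Complex.abs_arg_le_pi_div_two_iff.mpr hre
    obtain ⟨hθs1, hθs2⟩ := abs_le.mp hθs
    have habs : 0 < ‖s‖ := norm_pos_iff.mpr hs0
    set M : ℝ := ‖s‖ ^ α with hMdef
    have hM : 0 < M := Real.rpow_pos_of_pos habs α
    set u : ℂ := s ^ ((α : ℝ) : ℂ) with hudef
    have hu : u = ((M : ℝ) : ℂ) * Complex.exp (((α * θs : ℝ) : ℂ) * Complex.I) :=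
      cpow_real_polar s hs0 α
    have hαθ : |α * θs| ≤ α * (π / 2) := by
      rw [abs_mul, abs_of_pos hα0]
      exact mul_le_mul_of_nonneg_left hθs hα0.le
    have hαθ2 : α * (π / 2) ≤ π / 2 := by nlinarith
    have hure : 0 ≤ u.re := by
      rw [hu, polar_re]
      have : 0 ≤ Real.cos (α * θs) := by
        apply Real.cos_nonneg_of_mem_Icc
        constructor <;> [nlinarith [abs_le.mp hαθ]; nlinarith [abs_le.mp hαθ]]
      positivity
    have huim : u.im = M * Real.sin (α * θs) := by rw [hu, polar_im]
    set w : ℂ := u - (ω : ℂ) with hwdef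
    have hwre : w.re = u.re - ω := by simp [hwdef]
    have hwim : w.im = u.im := by simp [hwdef]
    have hwre' : 0 < w.re := by rw [hwre]; linarith
    have hw0 : w ≠ 0 := by
      intro h; rw [h] at hwre'; simp at hwre'
    -- abs u = M
    have habsu : ‖u‖ = M := by
      rw [hu, norm_mul, Complex.norm_exp]
      simp [Complex.norm_of_nonneg hM.le, hM.le]
    -- abs u < abs w
    have habsuw : ‖u‖ < ‖w‖ := by
      have h1 : (‖u‖) ^ 2 < (‖w‖) ^ 2 := by
        rw [Complex.sq_norm, Complex.sq_norm, Complex.normSq_apply, Complex.normSq_apply,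
          hwre, hwim]
        nlinarith
      nlinarith [norm_nonneg u, norm_nonneg w]
    have habsw : 0 < ‖w‖ := lt_of_le_of_lt (by rw [habsu]; exact hM.le) habsuw
    set θw := Complex.arg w with hθwdef
    have hθwle : |θw| ≤ π / 2 := Complex.abs_arg_le_pi_div_two_iff.mpr hwre'.le
    -- sin |θw| = |w.im| / abs w
    have hsinθw : Real.sin |θw| = |w.im| / ‖w‖ := by
      rw [sin_abs_eq (le_trans hθwle (by linarith)), Complex.sin_arg, abs_div,
        _root_.abs_of_pos habsw]
    -- key : |θw| < α * (π/2)
    have hkey : |θw| < α * (π / 2) := by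
      have hsinpos : 0 < Real.sin (α * (π / 2)) := by
        apply Real.sin_pos_of_pos_of_lt_pi <;> nlinarith
      have himw : |w.im| = M * Real.sin |α * θs| := by
        rw [hwim, huim, abs_mul, _root_.abs_of_pos hM,
          sin_abs_eq (le_trans hαθ (by linarith))]
      have hsinle : Real.sin |α * θs| ≤ Real.sin (α * (π / 2)) := by
        apply Real.strictMonoOn_sin.monotoneOn _ _ hαθ
        · constructor
          · linarith [abs_nonneg (α * θs)]
          · linarith [hαθ]
        · constructor <;> nlinarith
      have hlt : Real.sin |θw| < Real.sin (α * (π / 2)) := by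
        rw [hsinθw, himw]
        rcases eq_or_lt_of_le (Real.sin_nonneg_of_nonneg_of_le_pi (abs_nonneg _)
          (by linarith [hαθ, abs_nonneg (α * θs)]) : 0 ≤ Real.sin |α * θs|) with h0 | h0
        · rw [← h0, mul_zero, zero_div]; exact hsinpos
        · have : M * Real.sin |α * θs| / ‖w‖ < Real.sin |α * θs| := by
            rw [div_lt_iff₀ habsw]
            nlinarith [habsu ▸ habsuw]
          linarith
      by_contra hc
      push_neg at hc
      have := Real.strictMonoOn_sin.monotoneOn
        (⟨by nlinarith, by nlinarith⟩ : α * (π/2) ∈ Set.Icc (-(π/2)) (π/2))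
        (⟨by linarith [abs_nonneg θw], hθwle⟩ : |θw| ∈ Set.Icc (-(π/2)) (π/2)) hc
      linarith
    obtain ⟨hθw1, hθw2⟩ := abs_lt.mp hkey
    -- total form of Fc
    set b := β - α * γ with hbdef
    have hFc : Fc α β γ ω s =
        ((‖s‖ ^ b * ‖w‖ ^ γ : ℝ) : ℂ) *
          Complex.exp (((b * θs + γ * θw : ℝ) : ℂ) * Complex.I) := by
      rw [Fc, cpow_real_polar s hs0 b, ← hudef, ← hwdef, cpow_real_polar w hw0 γ]
      push_cast
      rw [← hθsdef, ← hθwdef]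
      rw [mul_mul_mul_comm, ← Complex.exp_add]
      ring_nf
    -- |T| < π/2
    have hT : |b * θs + γ * θw| < π / 2 := by
      have h1 : |b * θs| ≤ b * (π / 2) := by
        rw [abs_mul, _root_.abs_of_nonneg hb]
        exact mul_le_mul_of_nonneg_left hθs hb
      have h2 : |γ * θw| < γ * (α * (π / 2)) := by
        rw [abs_mul, _root_.abs_of_pos hγ]
        exact mul_lt_mul_of_pos_left hkey hγ
      calc |b * θs + γ * θw| ≤ |b * θs| + |γ * θw| := abs_add_le _ _
        _ < b * (π / 2) + γ * (α * (π / 2)) := by linarith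
        _ = β * (π / 2) := by rw [hbdef]; ring
        _ ≤ π / 2 := by nlinarith
    have hcos : 0 < Real.cos (b * θs + γ * θw) := by
      apply Real.cos_pos_of_mem_Ioo
      obtain ⟨h1, h2⟩ := abs_lt.mp hT
      exact ⟨h1, h2⟩
    have hA : 0 < ‖s‖ ^ b * ‖w‖ ^ γ := by positivity
    have := congrArg Complex.re (hFc ▸ hs)
    rw [polar_re] at this
    simp only [Complex.ofReal_re] at this
    nlinarith
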